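/- Let n ≥ 2, let x_1,…,x_n ∈ {0,1}^d be pairwise distinct with at most one of them equal to the zero vector, let y_1,…,y_n ∈ {−1,1}, and let k(x,x') = exp(−100·(ln n)·‖x−x'‖₂²). Suppose k(x_i, −x_j) ≤ η for all i,j. Define V' = sup over γ ∈ ℝ^n, γ ≥ 0, of Σ_i γ_i − (1/2)Σ_{i,j} γ_i γ_j y_i y_j k(x_i,x_j), and V = sup over γ ∈ ℝ^n, γ ≥ 0, of Σ_i γ_i − (1/2)Σ_{i,j} γ_i γ_j y_i y_j k(x_i,x_j) + (1/2)Σ_{i,j} γ_i γ_j y_i y_j k(x_i,−x_j). Then |V − V'| ≤ 5·n⁴·η. -/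

import Mathlib

open Finset

lemma quad_abs_bound {n : ℕ} (γ : Fin n → ℝ) (hγ : ∀ i, 0 ≤ γ i)
    (c : Fin n → Fin n → ℝ) (ε : ℝ) (hc : ∀ i j, |c i j| ≤ ε) :
    |∑ i, ∑ j, γ i * γ j * c i j| ≤ ε * (∑ i, γ i) ^ 2 := by
  calc |∑ i, ∑ j, γ i * γ j * c i j| ≤ ∑ i, ∑ j, |γ i * γ j * c i j| := by
        refine (Finset.abs_sum_le_sum_abs _ _).trans ?_
        exact Finset.sum_le_sum fun i _ => Finset.abs_sum_le_sum_abs _ _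
    _ ≤ ∑ i, ∑ j, γ i * γ j * ε := by
        refine Finset.sum_le_sum fun i _ => Finset.sum_le_sum fun j _ => ?_
        rw [abs_mul, abs_mul, abs_of_nonneg (hγ i), abs_of_nonneg (hγ j)]
        exact mul_le_mul_of_nonneg_left (hc i j) (mul_nonneg (hγ i) (hγ j))
    _ = ε * (∑ i, γ i) ^ 2 := by
        rw [sq, Finset.sum_mul_sum, Finset.mul_sum]
        refine Finset.sum_congr rfl fun i _ => ?_
        rw [Finset.mul_sum]
        exact Finset.sum_congr rfl fun j _ => by ring

/-- The Gaussian kernel with parameter `C = 100 ln n`. -/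
noncomputable def gaussK (n d : ℕ) (x y : Fin d → ℝ) : ℝ :=
  Real.exp (-(100 * Real.log n) * ∑ l, (x l - y l) ^ 2)

set_option maxHeartbeats 3200000 in
theorem dual_svm_bias_perturbation (n d : ℕ) (hn : 2 ≤ n)
    (x : Fin n → Fin d → ℝ)
    (hx01 : ∀ i l, x i l = 0 ∨ x i l = 1)
    (hxinj : Function.Injective x)
    (hzero : ∀ i j, x i = 0 → x j = 0 → i = j)
    (y : Fin n → ℝ) (hy : ∀ i, y i = 1 ∨ y i = -1)
    (η : ℝ) (hη : ∀ i j, gaussK n d (x i) (-(x j)) ≤ η) :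
    |sSup {v : ℝ | ∃ γ : Fin n → ℝ, (∀ i, 0 ≤ γ i) ∧
          v = (∑ i, γ i)
            - (1 / 2) * ∑ i, ∑ j, γ i * γ j * y i * y j * gaussK n d (x i) (x j)
            + (1 / 2) * ∑ i, ∑ j, γ i * γ j * y i * y j * gaussK n d (x i) (-(x j))}
      - sSup {v : ℝ | ∃ γ : Fin n → ℝ, (∀ i, 0 ≤ γ i) ∧
          v = (∑ i, γ i)
            - (1 / 2) * ∑ i, ∑ j, γ i * γ j * y i * y j * gaussK n d (x i) (x j)}|
      ≤ 5 * (n : ℝ) ^ 4 * η := by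
  classical
  have hn0 : 0 < n := by omega
  have hN2 : (2:ℝ) ≤ (n:ℝ) := by exact_mod_cast hn
  have hNpos : (0:ℝ) < (n:ℝ) := by linarith
  set ε : ℝ := Real.exp (-(100 * Real.log n)) with hεdef
  have hεpos : 0 < ε := Real.exp_pos _
  have hlogN : 0 < Real.log n := Real.log_pos (by exact_mod_cast hn)
  have hε_le : ε ≤ 1 / (4 * (n:ℝ)) := by
    have h4N : (0:ℝ) < 4 * (n:ℝ) := by linarith
    have he : 1 / (4 * (n:ℝ)) = Real.exp (-(Real.log (4 * (n:ℝ)))) := by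
      rw [Real.exp_neg, Real.exp_log h4N, one_div]
    rw [hεdef, he]
    apply Real.exp_le_exp.mpr
    have hlog4 : Real.log (4 * (n:ℝ)) = Real.log 4 + Real.log n :=
      Real.log_mul (by norm_num) (by linarith)
    have h4 : Real.log 4 ≤ 2 * Real.log n := by
      have h42 : Real.log 4 = 2 * Real.log 2 := by
        rw [show (4:ℝ) = 2^2 by norm_num, Real.log_pow]; push_cast; ring
      have := Real.log_le_log (by norm_num : (0:ℝ) < 2) hN2
      linarith [h42]
    linarith
  -- kernel facts
  have hk_pos : ∀ u v : Fin d → ℝ, 0 < gaussK n d u v := fun u v => Real.exp_pos _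
  have hc_nonneg : 0 ≤ 100 * Real.log n := by linarith
  have hk_le : ∀ u v : Fin d → ℝ, (1:ℝ) ≤ ∑ l, (u l - v l)^2 → gaussK n d u v ≤ ε := by
    intro u v h1
    rw [gaussK, hεdef]
    apply Real.exp_le_exp.mpr
    nlinarith [hc_nonneg, h1]
  have hk_diag : ∀ i, gaussK n d (x i) (x i) = 1 := by
    intro i; simp [gaussK]
  have hone_le : ∀ (f : Fin d → ℝ) (l : Fin d), (∀ m, 0 ≤ f m) → 1 ≤ f l → 1 ≤ ∑ m, f m :=
    fun f l h0 h1 => le_trans h1 (Finset.single_le_sum (fun m _ => h0 m) (Finset.mem_univ l))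
  have hk_off : ∀ i j, i ≠ j → gaussK n d (x i) (x j) ≤ ε := by
    intro i j hij
    apply hk_le
    have hne : x i ≠ x j := fun h => hij (hxinj h)
    obtain ⟨l, hl⟩ := Function.ne_iff.mp hne
    refine hone_le _ l (fun m => sq_nonneg _) ?_
    rcases hx01 i l with h|h <;> rcases hx01 j l with h'|h' <;>
      rw [h, h'] at hl ⊢ <;> norm_num at hl <;> norm_num
  -- Cauchy–Schwarz
  have hCS : ∀ γ : Fin n → ℝ, (∑ i, γ i)^2 ≤ (n:ℝ) * ∑ i, (γ i)^2 := by
    intro γ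
    have := sq_sum_le_card_mul_sum_sq (s := (Finset.univ : Finset (Fin n))) (f := γ)
    simpa [Finset.card_univ] using this
  -- decomposition of the main quadratic form
  have hA : ∀ γ : Fin n → ℝ, (∀ i, 0 ≤ γ i) →
      |(∑ i, ∑ j, γ i * γ j * y i * y j * gaussK n d (x i) (x j)) - ∑ i, (γ i)^2|
        ≤ ε * (∑ i, γ i)^2 := by
    intro γ hγ
    have hc : ∀ i j, |y i * y j * gaussK n d (x i) (x j) - (if i = j then 1 else 0)| ≤ ε := by
      intro i j
      by_cases hij : i = j
      · subst hij
        rcases hy i with h|h <;> rw [h, hk_diag i] <;> norm_num <;> linarith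
      · rw [if_neg hij, sub_zero, abs_mul, abs_mul, abs_of_pos (hk_pos _ _)]
        rcases hy i with h|h <;> rcases hy j with h'|h' <;> rw [h, h'] <;>
          norm_num <;> exact hk_off i j hij
    have hq := quad_abs_bound γ hγ
      (fun i j => y i * y j * gaussK n d (x i) (x j) - (if i = j then 1 else 0)) ε hc
    have heq : (∑ i, ∑ j, γ i * γ j *
          (y i * y j * gaussK n d (x i) (x j) - (if i = j then 1 else 0)))
        = (∑ i, ∑ j, γ i * γ j * y i * y j * gaussK n d (x i) (x j)) - ∑ i, (γ i)^2 := by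
      rw [← Finset.sum_sub_distrib]
      refine Finset.sum_congr rfl fun i _ => ?_
      have hterm : ∀ j, γ i * γ j * (y i * y j * gaussK n d (x i) (x j) - (if i = j then 1 else 0))
          = γ i * γ j * y i * y j * gaussK n d (x i) (x j) - (if i = j then γ i ^ 2 else 0) := by
        intro j
        by_cases hij : i = j
        · subst hij; rw [if_pos rfl, if_pos rfl]; ring
        · rw [if_neg hij, if_neg hij]; ring
      rw [Finset.sum_congr rfl (fun j _ => hterm j), Finset.sum_sub_distrib,
        Finset.sum_ite_eq]
      simp
    rwa [heq] at hq
  -- bound on the perturbation quadratic form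
  have hB : ∀ (η' : ℝ), (∀ i j, gaussK n d (x i) (-(x j)) ≤ η') →
      ∀ γ : Fin n → ℝ, (∀ i, 0 ≤ γ i) →
      |∑ i, ∑ j, γ i * γ j * y i * y j * gaussK n d (x i) (-(x j))| ≤ η' * (∑ i, γ i)^2 := by
    intro η' hη' γ hγ
    have hc : ∀ i j, |y i * y j * gaussK n d (x i) (-(x j))| ≤ η' := by
      intro i j
      rw [abs_mul, abs_mul, abs_of_pos (hk_pos _ _)]
      rcases hy i with h|h <;> rcases hy j with h'|h' <;> rw [h, h'] <;>
        norm_num <;> exact hη' i j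
    have hq := quad_abs_bound γ hγ
      (fun i j => y i * y j * gaussK n d (x i) (-(x j))) η' hc
    have heq : (∑ i, ∑ j, γ i * γ j * (y i * y j * gaussK n d (x i) (-(x j))))
        = ∑ i, ∑ j, γ i * γ j * y i * y j * gaussK n d (x i) (-(x j)) := by
      refine Finset.sum_congr rfl fun i _ => Finset.sum_congr rfl fun j _ => by ring
    rwa [heq] at hq
  have hεL2 : ∀ γ : Fin n → ℝ, ε * (∑ i, γ i)^2 ≤ (∑ i, (γ i)^2)/4 := by
    intro γ
    have t1 : ε * (∑ i, γ i)^2 ≤ (1/(4*(n:ℝ))) * (∑ i, γ i)^2 :=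
      mul_le_mul_of_nonneg_right hε_le (sq_nonneg _)
    have t2 : (1/(4*(n:ℝ))) * (∑ i, γ i)^2 ≤ (1/(4*(n:ℝ))) * ((n:ℝ) * ∑ i, (γ i)^2) :=
      mul_le_mul_of_nonneg_left (hCS γ) (by positivity)
    have hNne : (n:ℝ) ≠ 0 := ne_of_gt hNpos
    have t3 : (1/(4*(n:ℝ))) * ((n:ℝ) * ∑ i, (γ i)^2) = (∑ i, (γ i)^2)/4 := by
      field_simp
    linarith
  have hf_le : ∀ γ : Fin n → ℝ, (∀ i, 0 ≤ γ i) →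
      (∑ i, γ i) - (1/2) * (∑ i, ∑ j, γ i * γ j * y i * y j * gaussK n d (x i) (x j))
        ≤ (∑ i, γ i) - (3/8) * ∑ i, (γ i)^2 := by
    intro γ hγ
    have h1 := abs_le.mp (hA γ hγ)
    have h2 := hεL2 γ
    linarith [h1.1]
  have key_bound : ∀ L S' : ℝ, 0 ≤ L → 0 ≤ S' → L^2 ≤ (n:ℝ)*S' → L - (1/4)*S' ≤ (n:ℝ) := by
    intro L S' hL hS hls
    nlinarith [sq_nonneg (L - 2*(n:ℝ)), hNpos]
  have key_L : ∀ L S' : ℝ, 0 ≤ L → 0 ≤ S' → L^2 ≤ (n:ℝ)*S' → 0 < L - (1/4)*S' → L ≤ 4*(n:ℝ) := by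
    intro L S' hL hS hls hpos
    nlinarith [hNpos, mul_nonneg hL hL]
  -- names for the two sets
  set Sg := {v : ℝ | ∃ γ : Fin n → ℝ, (∀ i, 0 ≤ γ i) ∧
          v = (∑ i, γ i)
            - (1 / 2) * ∑ i, ∑ j, γ i * γ j * y i * y j * gaussK n d (x i) (x j)
            + (1 / 2) * ∑ i, ∑ j, γ i * γ j * y i * y j * gaussK n d (x i) (-(x j))} with hSgdef
  set Sf := {v : ℝ | ∃ γ : Fin n → ℝ, (∀ i, 0 ≤ γ i) ∧
          v = (∑ i, γ i)
            - (1 / 2) * ∑ i, ∑ j, γ i * γ j * y i * y j * gaussK n d (x i) (x j)} with hSfdef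
  have hSf_mem0 : (0:ℝ) ∈ Sf := ⟨fun _ => 0, fun i => le_refl 0, by simp⟩
  have hSg_mem0 : (0:ℝ) ∈ Sg := ⟨fun _ => 0, fun i => le_refl 0, by simp⟩
  have hSf_ub : ∀ v ∈ Sf, v ≤ (n:ℝ) := by
    rintro v ⟨γ, hγ, rfl⟩
    have h1 := hf_le γ hγ
    have hL : 0 ≤ ∑ i, γ i := Finset.sum_nonneg fun i _ => hγ i
    have hS : 0 ≤ ∑ i, (γ i)^2 := Finset.sum_nonneg fun i _ => sq_nonneg _
    have h2 := key_bound (∑ i, γ i) (∑ i, (γ i)^2) hL hS (hCS γ)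
    linarith
  have hSf_bdd : BddAbove Sf := ⟨(n:ℝ), fun v hv => hSf_ub v hv⟩
  have hVf_ge : 0 ≤ sSup Sf := le_csSup hSf_bdd hSf_mem0
  have hVf_le : sSup Sf ≤ (n:ℝ) := csSup_le ⟨0, hSf_mem0⟩ hSf_ub
  by_cases hz : ∃ i₀, x i₀ = 0
  · -- a zero vector exists: η ≥ 1 and Sg is unbounded above
    obtain ⟨i₀, hi₀⟩ := hz
    have hk00 : gaussK n d (x i₀) (-(x i₀)) = 1 := by
      rw [hi₀]; simp [gaussK]
    have hη1 : 1 ≤ η := hk00 ▸ hη i₀ i₀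
    have hnb : ¬ BddAbove Sg := by
      rintro ⟨M, hM⟩
      have hmem : ∀ t : ℝ, 0 ≤ t → t ∈ Sg := by
        intro t ht
        refine ⟨fun j => if j = i₀ then t else 0, fun i => by dsimp only; split <;> simp [ht], ?_⟩
        have hq : ∀ K : Fin n → Fin n → ℝ,
            (∑ i, ∑ j, (if i = i₀ then t else 0) * (if j = i₀ then t else 0) * y i * y j * K i j)
              = t * t * y i₀ * y i₀ * K i₀ i₀ := by
          intro K
          rw [Finset.sum_eq_single i₀]
          · rw [Finset.sum_eq_single i₀]
            · simp
            · intro j _ hj; simp [hj]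
            · intro h; exact absurd (Finset.mem_univ i₀) h
          · intro i _ hi
            rw [Finset.sum_eq_zero]
            intro j _; simp [hi]
          · intro h; exact absurd (Finset.mem_univ i₀) h
        rw [hq (fun i j => gaussK n d (x i) (x j)), hq (fun i j => gaussK n d (x i) (-(x j))),
          hk_diag i₀, hk00]
        have : ∑ i, (if i = i₀ then t else 0) = t := by
          rw [Finset.sum_ite_eq']; simp
        rw [this]; ring
      have h1 : max (M+1) 0 ∈ Sg := hmem _ (le_max_right _ _)
      have h2 := hM h1
      have h3 := le_max_left (M+1) 0
      linarith
    rw [csSup_of_not_bddAbove hnb, Real.sSup_empty, zero_sub, abs_neg, abs_of_nonneg hVf_ge]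
    have hn2 : 4 ≤ (n:ℝ)^2 := by nlinarith [hN2]
    have hn3 : 8 ≤ (n:ℝ)^3 := by nlinarith [hn2, hN2]
    have hbig : (n:ℝ) ≤ 5*(n:ℝ)^4 := by nlinarith [hn3, hNpos]
    have h5 : 0 < 5*(n:ℝ)^4 := by positivity
    nlinarith [hVf_le]
  · -- no zero vector: all cross-kernel entries are at most ε
    push_neg at hz
    have hη0 : 0 < η := lt_of_lt_of_le (hk_pos _ _) (hη ⟨0, hn0⟩ ⟨0, hn0⟩)
    have hk_neg : ∀ i j, gaussK n d (x i) (-(x j)) ≤ ε := by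
      intro i j
      apply hk_le
      obtain ⟨l, hl⟩ := Function.ne_iff.mp (hz i)
      have hl0 : x i l ≠ 0 := by simpa using hl
      have h1 : x i l = 1 := (hx01 i l).resolve_left hl0
      have hneg : (-(x j)) l = -(x j l) := rfl
      refine hone_le _ l (fun m => sq_nonneg _) ?_
      rcases hx01 j l with h'|h' <;> rw [h1, hneg, h'] <;> norm_num
    have hg_le : ∀ γ : Fin n → ℝ, (∀ i, 0 ≤ γ i) →
        (∑ i, γ i) - (1/2) * (∑ i, ∑ j, γ i * γ j * y i * y j * gaussK n d (x i) (x j))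
          + (1/2) * (∑ i, ∑ j, γ i * γ j * y i * y j * gaussK n d (x i) (-(x j)))
          ≤ (∑ i, γ i) - (1/4) * ∑ i, (γ i)^2 := by
      intro γ hγ
      have h1 := abs_le.mp (hA γ hγ)
      have h2 := abs_le.mp (hB ε hk_neg γ hγ)
      have h3 := hεL2 γ
      linarith [h1.1, h2.2]
    have hSg_ub : ∀ v ∈ Sg, v ≤ (n:ℝ) := by
      rintro v ⟨γ, hγ, rfl⟩
      have h1 := hg_le γ hγ
      have hL : 0 ≤ ∑ i, γ i := Finset.sum_nonneg fun i _ => hγ i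
      have hS : 0 ≤ ∑ i, (γ i)^2 := Finset.sum_nonneg fun i _ => sq_nonneg _
      have h2 := key_bound (∑ i, γ i) (∑ i, (γ i)^2) hL hS (hCS γ)
      linarith
    have hSg_bdd : BddAbove Sg := ⟨(n:ℝ), fun v hv => hSg_ub v hv⟩
    have hVg_ge : 0 ≤ sSup Sg := le_csSup hSg_bdd hSg_mem0
    have h8 : 0 ≤ 8*(n:ℝ)^2*η := by positivity
    have dir1 : ∀ v ∈ Sf, v ≤ sSup Sg + 8*(n:ℝ)^2*η := by
      rintro v ⟨γ, hγ, hveq⟩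
      by_cases hv : v ≤ 0
      · linarith
      · push_neg at hv
        have hL : 0 ≤ ∑ i, γ i := Finset.sum_nonneg fun i _ => hγ i
        have hS : 0 ≤ ∑ i, (γ i)^2 := Finset.sum_nonneg fun i _ => sq_nonneg _
        have hf := hf_le γ hγ
        have hpos : 0 < (∑ i, γ i) - (1/4) * ∑ i, (γ i)^2 := by
          rw [hveq] at hv; linarith
        have hL4 := key_L _ _ hL hS (hCS γ) hpos
        have hBb := abs_le.mp (hB η hη γ hγ)
        have hgmem : v + (1/2) * (∑ i, ∑ j, γ i * γ j * y i * y j * gaussK n d (x i) (-(x j))) ∈ Sg :=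
          ⟨γ, hγ, by rw [hveq]⟩
        have hle := le_csSup hSg_bdd hgmem
        have hL2 : (∑ i, γ i)^2 ≤ 16*(n:ℝ)^2 := by
          have h16 : (4*(n:ℝ))^2 = 16*(n:ℝ)^2 := by ring
          calc (∑ i, γ i)^2 ≤ (4*(n:ℝ))^2 := by gcongr
            _ = 16*(n:ℝ)^2 := h16
        have hB2 : η * (∑ i, γ i)^2 ≤ 16*(n:ℝ)^2*η := by
          have := mul_le_mul_of_nonneg_left hL2 hη0.le
          linarith
        linarith [hBb.1]
    have dir2 : ∀ v ∈ Sg, v ≤ sSup Sf + 8*(n:ℝ)^2*η := by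
      rintro v ⟨γ, hγ, hveq⟩
      by_cases hv : v ≤ 0
      · linarith
      · push_neg at hv
        have hL : 0 ≤ ∑ i, γ i := Finset.sum_nonneg fun i _ => hγ i
        have hS : 0 ≤ ∑ i, (γ i)^2 := Finset.sum_nonneg fun i _ => sq_nonneg _
        have hg := hg_le γ hγ
        have hpos : 0 < (∑ i, γ i) - (1/4) * ∑ i, (γ i)^2 := by
          rw [hveq] at hv; linarith
        have hL4 := key_L _ _ hL hS (hCS γ) hpos
        have hBb := abs_le.mp (hB η hη γ hγ)
        have hfmem : v - (1/2) * (∑ i, ∑ j, γ i * γ j * y i * y j * gaussK n d (x i) (-(x j))) ∈ Sf :=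
          ⟨γ, hγ, by rw [hveq]; ring⟩
        have hle := le_csSup hSf_bdd hfmem
        have hL2 : (∑ i, γ i)^2 ≤ 16*(n:ℝ)^2 := by
          have h16 : (4*(n:ℝ))^2 = 16*(n:ℝ)^2 := by ring
          calc (∑ i, γ i)^2 ≤ (4*(n:ℝ))^2 := by gcongr
            _ = 16*(n:ℝ)^2 := h16
        have hB2 : η * (∑ i, γ i)^2 ≤ 16*(n:ℝ)^2*η := by
          have := mul_le_mul_of_nonneg_left hL2 hη0.le
          linarith
        linarith [hBb.2]
    have hVfVg : sSup Sf ≤ sSup Sg + 8*(n:ℝ)^2*η := csSup_le ⟨0, hSf_mem0⟩ dir1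
    have hVgVf : sSup Sg ≤ sSup Sf + 8*(n:ℝ)^2*η := csSup_le ⟨0, hSg_mem0⟩ dir2
    have h85 : 8*(n:ℝ)^2*η ≤ 5*(n:ℝ)^4*η := by
      have hsq : 4 ≤ (n:ℝ)^2 := by nlinarith [hN2]
      nlinarith [hη0, hsq, sq_nonneg ((n:ℝ)^2)]
    rw [abs_sub_le_iff]
    constructor <;> linarith
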